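/- Let S be a 2-spread of PG(5,q). The number of planes of PG(5,q) that meet every one of some q²+q+1 elements of S in exactly one point (and are disjoint from all other elements of S) is exactly q³(q³+1)(q³−1). -/

import Mathlib

open Module Submodule Set Finset
set_option linter.unusedSectionVars false
set_option maxHeartbeats 1000000

section Fibers

/-- Generic fiber-counting lemma. -/
theorem my_ncard_eq_sum_fibers {α β : Type*} [Finite α] [DecidableEq β] (s : Set α)
    (t : Finset β) (f : α → β) (h : ∀ a ∈ s, f a ∈ t) :
    s.ncard = ∑ b ∈ t, {a ∈ s | f a = b}.ncard := by
  classical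
  have : Fintype α := Fintype.ofFinite α
  rw [Set.ncard_eq_toFinset_card' s]
  rw [Finset.card_eq_sum_card_fiberwise (t := t) (f := f)
    (fun x hx => h x (by simpa using hx))]
  refine Finset.sum_congr rfl fun b _ => ?_
  rw [Set.ncard_eq_toFinset_card']
  congr 1
  ext a
  simp [Set.mem_toFinset]

end Fibers

section General

variable {K : Type} [Field K] [Fintype K] {V : Type} [AddCommGroup V] [Module K V]
  [FiniteDimensional K V]

local notation "q" => Fintype.card K

theorem my_card_submodule (W : Submodule K V) : Nat.card W = q ^ finrank K W := by
  have : Finite V := Module.finite_of_finite K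
  have : Fintype W := Fintype.ofFinite W
  rw [Nat.card_eq_fintype_card, card_eq_pow_finrank (K := K)]

instance my_finite_submodule : Finite (Submodule K V) := by
  have : Finite V := Module.finite_of_finite K
  exact Finite.of_injective (fun W : Submodule K V => (W : Set V)) SetLike.coe_injective

theorem my_ncard_diff_zero (W : Submodule K V) :
    ((W : Set V) \ {0}).ncard = q ^ finrank K W - 1 := by
  have : Finite V := Module.finite_of_finite K
  have h0 : (0 : V) ∈ (W : Set V) := W.zero_mem
  have := Set.ncard_diff_singleton_of_mem (s := (W : Set V)) h0
  rw [this, ← my_card_submodule (K := K) W, ← Nat.card_coe_set_eq]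
  rfl

/-- Number of lines (1-dim subspaces). -/
theorem my_lines_mul :
    {L : Submodule K V | finrank K L = 1}.ncard * (q - 1) = q ^ finrank K V - 1 := by
  classical
  have : Finite V := Module.finite_of_finite K
  set s : Set V := {v : V | v ≠ 0} with hs
  have hsn : s.ncard = q ^ finrank K V - 1 := by
    have : s = ((⊤ : Submodule K V) : Set V) \ {0} := by
      ext v; simp [hs]
    rw [this, my_ncard_diff_zero, finrank_top]
  have htf : {L : Submodule K V | finrank K L = 1}.Finite := Set.toFinite _
  set t : Finset (Submodule K V) := htf.toFinset with ht
  have hcount := my_ncard_eq_sum_fibers s t (fun v => K ∙ v) (fun v hv => by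
    simp only [ht, Set.Finite.mem_toFinset, Set.mem_setOf_eq]
    exact finrank_span_singleton hv)
  have hfib : ∀ L ∈ t, {v ∈ s | (K ∙ v) = L}.ncard = q - 1 := by
    intro L hL
    simp only [ht, Set.Finite.mem_toFinset, Set.mem_setOf_eq] at hL
    have : {v ∈ s | (K ∙ v) = L} = (L : Set V) \ {0} := by
      ext v
      constructor
      · rintro ⟨hv, hvL⟩
        exact ⟨hvL ▸ Submodule.mem_span_singleton_self v, hv⟩
      · rintro ⟨hvL, hv0⟩
        have hv0' : v ≠ 0 := hv0
        refine ⟨hv0', ?_⟩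
        refine Submodule.eq_of_le_of_finrank_le ?_ ?_
        · rwa [Submodule.span_singleton_le_iff_mem]
        · rw [hL, finrank_span_singleton hv0']
    rw [this, my_ncard_diff_zero, hL, pow_one]
  rw [hsn] at hcount
  rw [hcount, Finset.sum_congr rfl hfib, Finset.sum_const, smul_eq_mul]
  congr 1
  rw [ht, Set.ncard_eq_toFinset_card]

theorem my_finrank_dualAnnihilator (W : Submodule K V) :
    finrank K W + finrank K W.dualAnnihilator = finrank K V := by
  have h1 : finrank K (V ⧸ W) = finrank K W.dualAnnihilator :=
    LinearEquiv.finrank_eq (Subspace.quotEquivAnnihilator W)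
  rw [← h1, add_comm]
  exact Submodule.finrank_quotient_add_finrank W

/-- Number of hyperplanes equals number of lines formula. -/
theorem my_hyper_mul (hn : 1 ≤ finrank K V) :
    {H : Submodule K V | finrank K H = finrank K V - 1}.ncard * (q - 1)
      = q ^ finrank K V - 1 := by
  classical
  have himg : (fun W : Submodule K V => W.dualAnnihilator) ''
      {H : Submodule K V | finrank K H = finrank K V - 1}
      = {L : Submodule K (Module.Dual K V) | finrank K L = 1} := by
    ext L
    constructor
    · rintro ⟨H, hH, rfl⟩
      simp only [Set.mem_setOf_eq] at hH ⊢
      have := my_finrank_dualAnnihilator (K := K) H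
      omega
    · intro hL
      simp only [Set.mem_setOf_eq] at hL
      refine ⟨L.dualCoannihilator, ?_, Subspace.dualCoannihilator_dualAnnihilator_eq⟩
      simp only [Set.mem_setOf_eq]
      have := Subspace.finrank_add_finrank_dualCoannihilator_eq (K := K) (V := V) L
      omega
  have hinj : Function.Injective (fun W : Submodule K V => W.dualAnnihilator) :=
    fun _ _ h => Subspace.dualAnnihilator_inj.mp h
  have := Set.ncard_image_of_injective
    {H : Submodule K V | finrank K H = finrank K V - 1} hinj
  rw [himg] at this
  rw [← this, my_lines_mul, Subspace.dual_finrank_eq]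

/-- Subspaces of `V` below `T` correspond to subspaces of `T`. -/
theorem my_ncard_below (T : Submodule K V) (j : ℕ) :
    {W : Submodule K V | W ≤ T ∧ finrank K W = j}.ncard
      = {W : Submodule K ↥T | finrank K W = j}.ncard := by
  have himg : (fun X : Submodule K ↥T => X.map T.subtype) ''
      {W : Submodule K ↥T | finrank K W = j}
      = {W : Submodule K V | W ≤ T ∧ finrank K W = j} := by
    ext W
    constructor
    · rintro ⟨X, hX, rfl⟩
      exact ⟨Submodule.map_subtype_le T X, by rw [Submodule.finrank_map_subtype_eq]; exact hX⟩
    · rintro ⟨hWT, hWj⟩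
      refine ⟨W.comap T.subtype, ?_, ?_⟩
      · simp only [Set.mem_setOf_eq]
        rw [← Submodule.finrank_map_subtype_eq, Submodule.map_comap_subtype,
          inf_eq_right.mpr hWT, hWj]
      · show Submodule.map T.subtype (W.comap T.subtype) = W
        rw [Submodule.map_comap_subtype, inf_eq_right.mpr hWT]
  have hinj : Function.Injective (fun X : Submodule K ↥T => X.map T.subtype) :=
    Submodule.map_injective_of_injective T.injective_subtype
  rw [← himg, Set.ncard_image_of_injective _ hinj]

/-- Superspaces of `U` of one higher dimension: count. -/
theorem my_super_mul (U : Submodule K V) (k : ℕ) (hk : finrank K U + 1 = k)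
    (hkn : k ≤ finrank K V) :
    {W : Submodule K V | U ≤ W ∧ finrank K W = k}.ncard * (q - 1)
      = q ^ (finrank K V - finrank K U) - 1 := by
  classical
  set n := finrank K V with hn
  -- transfer to dual
  have himg : (fun W : Submodule K V => W.dualAnnihilator) ''
      {W : Submodule K V | U ≤ W ∧ finrank K W = k}
      = {X : Submodule K (Module.Dual K V) | X ≤ U.dualAnnihilator ∧ finrank K X = n - k} := by
    ext X
    constructor
    · rintro ⟨W, ⟨hUW, hWk⟩, rfl⟩
      refine ⟨Subspace.dualAnnihilator_le_dualAnnihilator_iff.mpr hUW, ?_⟩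
      have := my_finrank_dualAnnihilator (K := K) W
      simp only [Set.mem_setOf_eq] at hWk ⊢
      omega
    · rintro ⟨hXU, hXr⟩
      refine ⟨X.dualCoannihilator, ⟨?_, ?_⟩, Subspace.dualCoannihilator_dualAnnihilator_eq⟩
      · intro v hv
        rw [Submodule.mem_dualCoannihilator]
        intro φ hφ
        exact (Submodule.mem_dualAnnihilator φ).mp (hXU hφ) v hv
      · have := Subspace.finrank_add_finrank_dualCoannihilator_eq (K := K) (V := V) X
        omega
  have hinj : Function.Injective (fun W : Submodule K V => W.dualAnnihilator) :=
    fun _ _ h => Subspace.dualAnnihilator_inj.mp h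
  have h1 := Set.ncard_image_of_injective
    {W : Submodule K V | U ≤ W ∧ finrank K W = k} hinj
  rw [himg] at h1
  rw [← h1]
  -- now count subspaces of dim n - k inside U.dualAnnihilator, of finrank n - (k-1)
  have hfr : finrank K U.dualAnnihilator = n - finrank K ↥U := by
    have := my_finrank_dualAnnihilator (K := K) U
    omega
  rw [my_ncard_below U.dualAnnihilator (n - k)]
  have hfr' : n - k = finrank K ↥U.dualAnnihilator - 1 := by omega
  rw [hfr']
  rw [my_hyper_mul (K := K) (V := ↥U.dualAnnihilator) (by omega : 1 ≤ finrank K ↥U.dualAnnihilator), hfr]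

/-- The Gaussian-binomial recurrence via double counting flags. -/
theorem my_step (k : ℕ) (hk : 1 ≤ k) (hkn : k ≤ finrank K V) :
    {W : Submodule K V | finrank K W = k}.ncard * (q ^ k - 1)
      = {U : Submodule K V | finrank K U = k - 1}.ncard
          * (q ^ (finrank K V - (k - 1)) - 1) := by
  classical
  set n := finrank K V with hn
  set P : Set (Submodule K V × Submodule K V) :=
    {p | finrank K p.1 = k - 1 ∧ finrank K p.2 = k ∧ p.1 ≤ p.2} with hP
  have htWf : {W : Submodule K V | finrank K W = k}.Finite := Set.toFinite _
  have htUf : {U : Submodule K V | finrank K U = k - 1}.Finite := Set.toFinite _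
  set tW := htWf.toFinset with htW
  set tU := htUf.toFinset with htU
  -- count P fiberwise over second coordinate
  have hcount1 := my_ncard_eq_sum_fibers P tW Prod.snd (fun p hp => by
    simp only [htW, Set.Finite.mem_toFinset, Set.mem_setOf_eq]
    exact hp.2.1)
  have hfibW : ∀ W ∈ tW, {p ∈ P | p.2 = W}.ncard * (q - 1) = q ^ k - 1 := by
    intro W hW
    simp only [htW, Set.Finite.mem_toFinset, Set.mem_setOf_eq] at hW
    have himg : (fun U : Submodule K V => (U, W)) ''
        {U : Submodule K V | U ≤ W ∧ finrank K U = k - 1} = {p ∈ P | p.2 = W} := by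
      ext p
      constructor
      · rintro ⟨U, ⟨hUW, hUr⟩, rfl⟩
        exact ⟨⟨hUr, hW, hUW⟩, rfl⟩
      · rintro ⟨⟨h1, h2, h3⟩, h4⟩
        exact ⟨p.1, ⟨h4 ▸ h3, h1⟩, by rw [← h4]⟩
    have hinj : Function.Injective (fun U : Submodule K V => (U, W)) := by
      intro a b hab
      simpa using congrArg Prod.fst hab
    rw [← himg, Set.ncard_image_of_injective _ hinj, my_ncard_below W (k - 1)]
    have h2 : k - 1 = finrank K ↥W - 1 := by omega
    rw [h2, my_hyper_mul (by omega : 1 ≤ finrank K ↥W), hW]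
  -- count P fiberwise over first coordinate
  have hcount2 := my_ncard_eq_sum_fibers P tU Prod.fst (fun p hp => by
    simp only [htU, Set.Finite.mem_toFinset, Set.mem_setOf_eq]
    exact hp.1)
  have hfibU : ∀ U ∈ tU, {p ∈ P | p.1 = U}.ncard * (q - 1) = q ^ (n - (k - 1)) - 1 := by
    intro U hU
    simp only [htU, Set.Finite.mem_toFinset, Set.mem_setOf_eq] at hU
    have himg : (fun W : Submodule K V => (U, W)) ''
        {W : Submodule K V | U ≤ W ∧ finrank K W = k} = {p ∈ P | p.1 = U} := by
      ext p
      constructor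
      · rintro ⟨W, ⟨hUW, hWr⟩, rfl⟩
        exact ⟨⟨hU, hWr, hUW⟩, rfl⟩
      · rintro ⟨⟨h1, h2, h3⟩, h4⟩
        exact ⟨p.2, ⟨h4 ▸ h3, h2⟩, by rw [← h4]⟩
    have hinj : Function.Injective (fun W : Submodule K V => (U, W)) := by
      intro a b hab
      simpa using congrArg Prod.snd hab
    rw [← himg, Set.ncard_image_of_injective _ hinj,
      my_super_mul U k (by omega) hkn, hU]
  -- combine
  have key1 : P.ncard * (q - 1) = tW.card * (q ^ k - 1) := by
    rw [hcount1, Finset.sum_mul]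
    rw [Finset.sum_congr rfl hfibW, Finset.sum_const, smul_eq_mul]
  have key2 : P.ncard * (q - 1) = tU.card * (q ^ (n - (k - 1)) - 1) := by
    rw [hcount2, Finset.sum_mul]
    rw [Finset.sum_congr rfl hfibU, Finset.sum_const, smul_eq_mul]
  have hcW : {W : Submodule K V | finrank K W = k}.ncard = tW.card :=
    Set.ncard_eq_toFinset_card _ htWf
  have hcU : {U : Submodule K V | finrank K U = k - 1}.ncard = tU.card :=
    Set.ncard_eq_toFinset_card _ htUf
  rw [hcW, hcU, ← key1, key2]

end General

/-- A 2-spread of `PG(5,q)`. -/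
def IsSpread (K : Type) [Field K] (S : Set (Submodule K (Fin 6 → K))) : Prop :=
  (∀ W ∈ S, Module.finrank K ↥W = 3) ∧
  (∀ W ∈ S, ∀ W' ∈ S, W ≠ W' → W ⊓ W' = ⊥) ∧
  (∀ v : Fin 6 → K, v ≠ 0 → ∃ W ∈ S, v ∈ W)

section Spread

variable {K : Type} [Field K] [Fintype K]

local notation "q" => Fintype.card K
local notation "V6" => (Fin 6 → K)

theorem my_finrank_V6 : finrank K V6 = 6 := by simp

/-- Partition of the nonzero vectors of any subspace `π` by the spread. -/
theorem my_spread_sum {S : Set (Submodule K V6)} (hS : IsSpread K S)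
    (π : Submodule K V6) :
    ∑ σ ∈ (Set.toFinite S).toFinset, (q ^ finrank K ↥(π ⊓ σ) - 1)
      = q ^ finrank K ↥π - 1 := by
  classical
  have : Finite V6 := Module.finite_of_finite K
  set s : Set V6 := (π : Set V6) \ {0} with hs
  have hsn : s.ncard = q ^ finrank K ↥π - 1 := my_ncard_diff_zero π
  set f : V6 → Submodule K V6 := fun v =>
    if h : v ≠ 0 then (hS.2.2 v h).choose else ⊥ with hf
  have hfS : ∀ v : V6, v ≠ 0 → f v ∈ S ∧ v ∈ f v := by
    intro v hv
    simp only [hf, dif_pos hv]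
    exact ⟨(hS.2.2 v hv).choose_spec.1, (hS.2.2 v hv).choose_spec.2⟩
  have hcount := my_ncard_eq_sum_fibers s (Set.toFinite S).toFinset f (fun v hv => by
    rw [Set.Finite.mem_toFinset]
    exact (hfS v hv.2).1)
  have hfib : ∀ σ ∈ (Set.toFinite S).toFinset,
      {v ∈ s | f v = σ} = ((π ⊓ σ : Submodule K V6) : Set V6) \ {0} := by
    intro σ hσ
    rw [Set.Finite.mem_toFinset] at hσ
    ext v
    constructor
    · rintro ⟨⟨hvπ, hv0⟩, hvf⟩
      have hv0' : v ≠ 0 := hv0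
      exact ⟨Submodule.mem_inf.mpr ⟨hvπ, hvf ▸ (hfS v hv0').2⟩, hv0⟩
    · rintro ⟨hv, hv0⟩
      have hv0' : v ≠ 0 := hv0
      obtain ⟨hvπ, hvσ⟩ := Submodule.mem_inf.mp hv
      refine ⟨⟨hvπ, hv0⟩, ?_⟩
      by_contra hne
      have hbot := hS.2.1 (f v) (hfS v hv0').1 σ hσ hne
      have : v ∈ (⊥ : Submodule K V6) := hbot ▸ Submodule.mem_inf.mpr ⟨(hfS v hv0').2, hvσ⟩
      exact hv0' (by simpa using this)
  rw [hsn] at hcount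
  rw [hcount]
  refine (Finset.sum_congr rfl fun σ hσ => ?_).symm
  rw [hfib σ hσ, my_ncard_diff_zero]

theorem my_spread_card {S : Set (Submodule K V6)} (hS : IsSpread K S) (hq2 : 2 ≤ q) :
    S.ncard = q ^ 3 + 1 := by
  classical
  have h := my_spread_sum hS ⊤
  rw [finrank_top, my_finrank_V6] at h
  have h2 : ∀ σ ∈ (Set.toFinite S).toFinset, q ^ finrank K ↥((⊤ : Submodule K V6) ⊓ σ) - 1
      = q ^ 3 - 1 := by
    intro σ hσ
    rw [Set.Finite.mem_toFinset] at hσ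
    rw [top_inf_eq, hS.1 σ hσ]
  rw [Finset.sum_congr rfl h2, Finset.sum_const, smul_eq_mul] at h
  have hcard : S.ncard = (Set.toFinite S).toFinset.card := Set.ncard_eq_toFinset_card _ _
  rw [hcard]
  have hq3 : 1 ≤ q ^ 3 := Nat.one_le_pow _ _ (by omega)
  have hident : (q ^ 3 + 1) * (q ^ 3 - 1) = q ^ 6 - 1 := by
    zify [hq3, Nat.one_le_pow 6 q (by omega)]
    ring
  have := h.trans hident.symm
  have h13 : 1 < q ^ 3 := Nat.one_lt_pow (by omega) (by omega)
  exact Nat.eq_of_mul_eq_mul_right (by omega) this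

theorem my_planes_card (hq2 : 2 ≤ q) :
    {π : Submodule K V6 | finrank K ↥π = 3}.ncard
      = (q ^ 3 + 1) * (q ^ 2 + 1) * (q ^ 4 + q ^ 3 + q ^ 2 + q + 1) := by
  have e1 : 1 ≤ q := by omega
  have e2 : 1 ≤ q ^ 2 := Nat.one_le_pow _ _ (by omega)
  have e3 : 1 ≤ q ^ 3 := Nat.one_le_pow _ _ (by omega)
  have e4 : 1 ≤ q ^ 4 := Nat.one_le_pow _ _ (by omega)
  have e5 : 1 ≤ q ^ 5 := Nat.one_le_pow _ _ (by omega)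
  have e6 : 1 ≤ q ^ 6 := Nat.one_le_pow _ _ (by omega)
  have h1 := my_lines_mul (K := K) (V := V6)
  rw [my_finrank_V6] at h1
  have h2 := my_step (K := K) (V := V6) 2 (by omega) (by rw [my_finrank_V6]; omega)
  rw [my_finrank_V6] at h2
  norm_num at h2
  have h3 := my_step (K := K) (V := V6) 3 (by omega) (by rw [my_finrank_V6]; omega)
  rw [my_finrank_V6] at h3
  norm_num at h3
  have key : {π : Submodule K V6 | finrank K ↥π = 3}.ncard
      * ((q ^ 3 - 1) * ((q ^ 2 - 1) * (q - 1)))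
      = ((q ^ 3 + 1) * (q ^ 2 + 1) * (q ^ 4 + q ^ 3 + q ^ 2 + q + 1))
      * ((q ^ 3 - 1) * ((q ^ 2 - 1) * (q - 1))) := by
    zify [e1, e2, e3, e4, e5, e6] at h1 h2 h3 ⊢
    linear_combination ((q : ℤ) ^ 2 - 1) * ((q : ℤ) - 1) * h3
      + (((q : ℤ) ^ 4 - 1) * ((q : ℤ) - 1)) * h2
      + (((q : ℤ) ^ 5 - 1) * ((q : ℤ) ^ 4 - 1)) * h1
  have h12 : 1 < q ^ 2 := Nat.one_lt_pow (by omega) (by omega)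
  have h13 : 1 < q ^ 3 := Nat.one_lt_pow (by omega) (by omega)
  exact Nat.eq_of_mul_eq_mul_right (Nat.mul_pos (by omega) (Nat.mul_pos (by omega) (by omega))) key

theorem my_unique_sigma {S : Set (Submodule K V6)} (hS : IsSpread K S)
    {π σ σ' : Submodule K V6} (hπ : finrank K ↥π = 3) (hσ : σ ∈ S) (hσ' : σ' ∈ S)
    (h2 : finrank K ↥(π ⊓ σ) = 2) (h2' : finrank K ↥(π ⊓ σ') = 2) : σ = σ' := by
  by_contra hne
  have hbot := hS.2.1 σ hσ σ' hσ' hne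
  have hXY : (π ⊓ σ) ⊓ (π ⊓ σ') = ⊥ := by
    rw [← le_bot_iff, ← hbot]
    exact le_inf (inf_le_left.trans inf_le_right) (inf_le_right.trans inf_le_right)
  have hsum := Submodule.finrank_sup_add_finrank_inf_eq (π ⊓ σ) (π ⊓ σ')
  rw [hXY, finrank_bot, h2, h2'] at hsum
  have hle : finrank K ↥((π ⊓ σ) ⊔ (π ⊓ σ')) ≤ 3 := by
    rw [← hπ]
    exact Submodule.finrank_mono (sup_le inf_le_left inf_le_left)
  omega

theorem my_Csigma_card {S : Set (Submodule K V6)} (hS : IsSpread K S) (hq2 : 2 ≤ q)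
    {σ : Submodule K V6} (hσ : σ ∈ S) :
    {π : Submodule K V6 | finrank K ↥π = 3 ∧ finrank K ↥(π ⊓ σ) = 2}.ncard
      = (q ^ 2 + q + 1) * (q ^ 3 + q ^ 2 + q) := by
  classical
  set Cσ : Set (Submodule K V6) :=
    {π : Submodule K V6 | finrank K ↥π = 3 ∧ finrank K ↥(π ⊓ σ) = 2} with hCσ
  have ht2f : {ℓ : Submodule K V6 | ℓ ≤ σ ∧ finrank K ↥ℓ = 2}.Finite := Set.toFinite _
  set t2 := ht2f.toFinset with ht2
  have hcount := my_ncard_eq_sum_fibers Cσ t2 (fun π => π ⊓ σ) (fun π hπ => by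
    rw [ht2, Set.Finite.mem_toFinset]
    exact ⟨inf_le_right, hπ.2⟩)
  have hσ3 : finrank K ↥σ = 3 := hS.1 σ hσ
  have hfib : ∀ ℓ ∈ t2, {π ∈ Cσ | π ⊓ σ = ℓ}.ncard = q ^ 3 + q ^ 2 + q := by
    intro ℓ hℓ
    rw [ht2, Set.Finite.mem_toFinset] at hℓ
    obtain ⟨hℓσ, hℓ2⟩ := hℓ
    have hset : {π ∈ Cσ | π ⊓ σ = ℓ}
        = {π : Submodule K V6 | ℓ ≤ π ∧ finrank K ↥π = 3} \ {σ} := by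
      ext π
      constructor
      · rintro ⟨⟨h3, h2⟩, heq⟩
        refine ⟨⟨heq ▸ inf_le_left, h3⟩, ?_⟩
        intro hπσ
        rw [Set.mem_singleton_iff] at hπσ
        rw [hπσ, inf_idem, hσ3] at h2
        omega
      · rintro ⟨⟨hle, h3⟩, hne⟩
        rw [Set.mem_singleton_iff] at hne
        have hle' : ℓ ≤ π ⊓ σ := le_inf hle hℓσ
        have hge2 : 2 ≤ finrank K ↥(π ⊓ σ) := hℓ2 ▸ Submodule.finrank_mono hle'
        have hle3 : finrank K ↥(π ⊓ σ) ≤ 3 := by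
          rw [← h3]; exact Submodule.finrank_mono inf_le_left
        have hne3 : finrank K ↥(π ⊓ σ) ≠ 3 := by
          intro hf3
          have : π ⊓ σ = π := Submodule.eq_of_le_of_finrank_le inf_le_left (by omega)
          have hπle : π ≤ σ := this ▸ inf_le_right
          exact hne (Submodule.eq_of_le_of_finrank_le hπle (by omega))
        have h2 : finrank K ↥(π ⊓ σ) = 2 := by omega
        refine ⟨⟨h3, h2⟩, ?_⟩
        exact (Submodule.eq_of_le_of_finrank_le hle' (by omega)).symm
    rw [hset]
    have hbig := my_super_mul (K := K) ℓ 3 (by rw [hℓ2]) (by rw [my_finrank_V6]; omega)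
    rw [my_finrank_V6, hℓ2] at hbig
    norm_num at hbig
    have hbigval : {π : Submodule K V6 | ℓ ≤ π ∧ finrank K ↥π = 3}.ncard
        = q ^ 3 + q ^ 2 + q + 1 := by
      have hident : (q ^ 3 + q ^ 2 + q + 1) * (q - 1) = q ^ 4 - 1 := by
        zify [Nat.one_le_pow 4 q (by omega), (by omega : 1 ≤ q)]
        ring
      exact Nat.eq_of_mul_eq_mul_right (by omega) (hbig.trans hident.symm)
    have hσmem : σ ∈ {π : Submodule K V6 | ℓ ≤ π ∧ finrank K ↥π = 3} := ⟨hℓσ, hσ3⟩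
    rw [Set.ncard_diff_singleton_of_mem hσmem, hbigval]
    omega
  rw [hcount, Finset.sum_congr rfl hfib, Finset.sum_const, smul_eq_mul]
  have ht2card : t2.card = q ^ 2 + q + 1 := by
    rw [ht2, ← Set.ncard_eq_toFinset_card _ ht2f, my_ncard_below σ 2]
    have hhyp := my_hyper_mul (K := K) (V := ↥σ) (by omega : 1 ≤ finrank K ↥σ)
    rw [hσ3] at hhyp
    norm_num at hhyp
    have hident : (q ^ 2 + q + 1) * (q - 1) = q ^ 3 - 1 := by
      zify [Nat.one_le_pow 3 q (by omega), (by omega : 1 ≤ q)]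
      ring
    exact Nat.eq_of_mul_eq_mul_right (by omega) (hhyp.trans hident.symm)
  rw [ht2card]

theorem my_typeC_card {S : Set (Submodule K V6)} (hS : IsSpread K S) (hq2 : 2 ≤ q) :
    {π : Submodule K V6 | finrank K ↥π = 3
        ∧ ∃ σ ∈ S, finrank K ↥(π ⊓ σ) = 2}.ncard
      = (q ^ 3 + 1) * ((q ^ 2 + q + 1) * (q ^ 3 + q ^ 2 + q)) := by
  classical
  set C : Set (Submodule K V6) :=
    {π : Submodule K V6 | finrank K ↥π = 3 ∧ ∃ σ ∈ S, finrank K ↥(π ⊓ σ) = 2} with hC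
  set f : Submodule K V6 → Submodule K V6 := fun π =>
    if h : ∃ σ ∈ S, finrank K ↥(π ⊓ σ) = 2 then h.choose else ⊥ with hf
  have hfspec : ∀ π : Submodule K V6, (h : ∃ σ ∈ S, finrank K ↥(π ⊓ σ) = 2) →
      f π ∈ S ∧ finrank K ↥(π ⊓ f π) = 2 := by
    intro π h
    have heq : f π = h.choose := by rw [hf]; exact dif_pos h
    rw [heq]
    exact ⟨h.choose_spec.1, h.choose_spec.2⟩
  have hcount := my_ncard_eq_sum_fibers C (Set.toFinite S).toFinset f (fun π hπ => by
    rw [Set.Finite.mem_toFinset]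
    exact (hfspec π hπ.2).1)
  have hfib : ∀ σ ∈ (Set.toFinite S).toFinset,
      {π ∈ C | f π = σ} = {π : Submodule K V6 | finrank K ↥π = 3
        ∧ finrank K ↥(π ⊓ σ) = 2} := by
    intro σ hσ
    rw [Set.Finite.mem_toFinset] at hσ
    ext π
    constructor
    · rintro ⟨⟨h3, hex⟩, heq⟩
      exact ⟨h3, heq ▸ (hfspec π hex).2⟩
    · rintro ⟨h3, h2⟩
      have hex : ∃ σ' ∈ S, finrank K ↥(π ⊓ σ') = 2 := ⟨σ, hσ, h2⟩
      obtain ⟨hfS, hf2⟩ := hfspec π hex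
      exact ⟨⟨h3, hex⟩, my_unique_sigma hS h3 hfS hσ hf2 h2⟩
  rw [hcount]
  have : ∀ σ ∈ (Set.toFinite S).toFinset,
      {π ∈ C | f π = σ}.ncard = (q ^ 2 + q + 1) * (q ^ 3 + q ^ 2 + q) := by
    intro σ hσ
    have hσS : σ ∈ S := by rwa [Set.Finite.mem_toFinset] at hσ
    rw [hfib σ hσ]
    exact my_Csigma_card hS hq2 hσS
  rw [Finset.sum_congr rfl this, Finset.sum_const, smul_eq_mul,
    ← Set.ncard_eq_toFinset_card _ (Set.toFinite S), my_spread_card hS hq2]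

end Spread

/-- for a 2-spread `S` of `PG(5,q)`, the number of planes of
`PG(5,q)` meeting exactly `q²+q+1` elements of `S` in exactly one point each
(and disjoint from all other elements of `S`) is exactly `q³(q³+1)(q³−1)`. -/
theorem stmt8 (q : ℕ) (hq : IsPrimePow q) (K : Type) [Field K] [Fintype K]
    (hK : Fintype.card K = q) (S : Set (Submodule K (Fin 6 → K)))
    (hS : IsSpread K S) :
    Set.ncard {π : Submodule K (Fin 6 → K) | Module.finrank K ↥π = 3 ∧ π ∉ S ∧
        Set.ncard {σ ∈ S | Module.finrank K ↥(π ⊓ σ) = 1} = q ^ 2 + q + 1 ∧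
        ∀ σ ∈ S, π ⊓ σ = ⊥ ∨ Module.finrank K ↥(π ⊓ σ) = 1} =
      q ^ 3 * (q ^ 3 + 1) * (q ^ 3 - 1) := by
  classical
  subst hK
  have hq2 : 2 ≤ Fintype.card K := hq.two_le
  set C : Set (Submodule K (Fin 6 → K)) :=
    {π : Submodule K (Fin 6 → K) | finrank K ↥π = 3
      ∧ ∃ σ ∈ S, finrank K ↥(π ⊓ σ) = 2} with hC
  have hBeq : {π : Submodule K (Fin 6 → K) | Module.finrank K ↥π = 3 ∧ π ∉ S ∧
        Set.ncard {σ ∈ S | Module.finrank K ↥(π ⊓ σ) = 1}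
          = Fintype.card K ^ 2 + Fintype.card K + 1 ∧
        ∀ σ ∈ S, π ⊓ σ = ⊥ ∨ Module.finrank K ↥(π ⊓ σ) = 1}
      = {π : Submodule K (Fin 6 → K) | finrank K ↥π = 3} \ (S ∪ C) := by
    ext π
    constructor
    · rintro ⟨h3, hnS, _, hall⟩
      refine ⟨h3, ?_⟩
      rintro (h | ⟨_, σ, hσ, h2⟩)
      · exact hnS h
      · rcases hall σ hσ with hb | h1
        · rw [hb, finrank_bot] at h2; omega
        · omega
    · rintro ⟨h3', hnot⟩
      have h3 : finrank K ↥π = 3 := h3'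
      have hnS : π ∉ S := fun h => hnot (Or.inl h)
      have hnC : ¬∃ σ ∈ S, finrank K ↥(π ⊓ σ) = 2 := fun h => hnot (Or.inr ⟨h3, h⟩)
      have hle1 : ∀ σ ∈ S, finrank K ↥(π ⊓ σ) ≤ 1 := by
        intro σ hσ
        have hle3 : finrank K ↥(π ⊓ σ) ≤ 3 := by
          rw [← h3]; exact Submodule.finrank_mono inf_le_left
        have hne2 : finrank K ↥(π ⊓ σ) ≠ 2 := fun h => hnC ⟨σ, hσ, h⟩
        have hne3 : finrank K ↥(π ⊓ σ) ≠ 3 := by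
          intro h
          have heq : π ⊓ σ = π := Submodule.eq_of_le_of_finrank_le inf_le_left (by omega)
          have hπσ : π ≤ σ := heq ▸ inf_le_right
          have : π = σ := Submodule.eq_of_le_of_finrank_le hπσ (by rw [hS.1 σ hσ, h3])
          exact hnS (this ▸ hσ)
        omega
      refine ⟨h3, hnS, ?_, ?_⟩

      · -- count the elements met in a point
        have hsum := my_spread_sum hS π
        rw [h3] at hsum
        set tS := (Set.toFinite S).toFinset with htS
        set t1 := tS.filter (fun σ => finrank K ↥(π ⊓ σ) = 1) with ht1
        have hsplit := Finset.sum_filter_add_sum_filter_not tS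
          (fun σ => finrank K ↥(π ⊓ σ) = 1)
          (fun σ => Fintype.card K ^ finrank K ↥(π ⊓ σ) - 1)
        have hone : ∑ σ ∈ t1, (Fintype.card K ^ finrank K ↥(π ⊓ σ) - 1)
            = t1.card * (Fintype.card K - 1) := by
          have hc : ∀ σ ∈ t1, Fintype.card K ^ finrank K ↥(π ⊓ σ) - 1
              = Fintype.card K - 1 := by
            intro σ hσ
            rw [ht1, Finset.mem_filter] at hσ
            rw [hσ.2, pow_one]
          rw [Finset.sum_congr rfl hc, Finset.sum_const, smul_eq_mul]
        have hzero : ∑ σ ∈ tS.filter (fun σ => ¬ finrank K ↥(π ⊓ σ) = 1),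
            (Fintype.card K ^ finrank K ↥(π ⊓ σ) - 1) = 0 := by
          refine Finset.sum_eq_zero fun σ hσ => ?_
          rw [Finset.mem_filter] at hσ
          have hσS : σ ∈ S := by
            have := hσ.1; rwa [htS, Set.Finite.mem_toFinset] at this
          have h0 : finrank K ↥(π ⊓ σ) = 0 := by
            have := hle1 σ hσS; have := hσ.2; omega
          rw [h0, pow_zero]
          omega
        rw [hone, hzero, add_zero, hsum] at hsplit
        have hident : (Fintype.card K ^ 2 + Fintype.card K + 1) * (Fintype.card K - 1)
            = Fintype.card K ^ 3 - 1 := by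
          zify [Nat.one_le_pow 3 (Fintype.card K) (by omega), (by omega : 1 ≤ Fintype.card K)]
          ring
        have hcard1 : t1.card = Fintype.card K ^ 2 + Fintype.card K + 1 :=
          Nat.eq_of_mul_eq_mul_right (by omega) (hsplit.trans hident.symm)
        have hsets : {σ | σ ∈ S ∧ Module.finrank K ↥(π ⊓ σ) = 1} = ↑t1 := by
          ext σ
          simp only [ht1, htS, Finset.coe_filter, Set.Finite.mem_toFinset,
            Set.mem_setOf_eq]
        rw [hsets, Set.ncard_coe_finset, hcard1]
      · intro σ hσ
        rcases Nat.eq_zero_or_pos (finrank K ↥(π ⊓ σ)) with h0 | hpos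
        · exact Or.inl (Submodule.finrank_eq_zero.mp h0)
        · exact Or.inr (by have := hle1 σ hσ; omega)
  have hPC : S ∪ C ⊆ {π : Submodule K (Fin 6 → K) | finrank K ↥π = 3} := by
    rintro π (h | h)
    · exact hS.1 π h
    · exact h.1
  have hdisj : Disjoint S C := by
    rw [Set.disjoint_left]
    rintro σ hσ ⟨h3, σ', hσ', h2⟩
    by_cases he : σ' = σ
    · rw [he, inf_idem] at h2
      have := hS.1 σ hσ
      omega
    · rw [hS.2.1 σ hσ σ' hσ' (fun hh => he hh.symm), finrank_bot] at h2
      omega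
  rw [hBeq, Set.ncard_diff hPC (Set.toFinite _),
    Set.ncard_union_eq hdisj (Set.toFinite _) (Set.toFinite _),
    my_planes_card hq2, my_spread_card hS hq2, my_typeC_card hS hq2]
  have key : (Fintype.card K ^ 3 + 1)
      + (Fintype.card K ^ 3 + 1) * ((Fintype.card K ^ 2 + Fintype.card K + 1)
        * (Fintype.card K ^ 3 + Fintype.card K ^ 2 + Fintype.card K))
      + Fintype.card K ^ 3 * (Fintype.card K ^ 3 + 1) * (Fintype.card K ^ 3 - 1)
      = (Fintype.card K ^ 3 + 1) * (Fintype.card K ^ 2 + 1)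
        * (Fintype.card K ^ 4 + Fintype.card K ^ 3 + Fintype.card K ^ 2
          + Fintype.card K + 1) := by
    zify [Nat.one_le_pow 3 (Fintype.card K) (by omega)]
    ring
  omega
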